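/- Let n and s be integers with 5 ≤ s ≤ n−1, and let Γ, X₁, …, X_s be smooth vector fields on ℝ^n with [X_i, Γ] = 0 for all i = 1, …, s. Then Γ is a derivation of the (s−1)-ary bracket B induced by 𝒩 = Γ∧X₁∧⋯∧X_{s−2} + Γ∧X₁∧⋯∧X_{s−4}∧X_{s−1}∧X_s: for all smooth functions f₁, …, f_{s−1}, Γ(B(f₁, …, f_{s−1})) = Σ_{j=1}^{s−1} B(f₁, …, f_{j−1}, Γ f_j, f_{j+1}, …, f_{s−1}). (This expresses the invariance L_Γ 𝒩 = 0 of the tensor under the flow of Γ.) -/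

import Mathlib

/-- A (not necessarily smooth) vector field on `ℝⁿ`, i.e. a map `ℝⁿ → ℝⁿ`. -/
abbrev VF (n : ℕ) : Type := (Fin n → ℝ) → (Fin n → ℝ)

/-- The action of a vector field `X` on a function `f`:
`(X f)(x) = Df(x)[X(x)]` (directional derivative). -/
noncomputable def vAct {n : ℕ} (X : VF n) (f : (Fin n → ℝ) → ℝ) : (Fin n → ℝ) → ℝ :=
  fun x => fderiv ℝ f x (X x)

/-- The Lie bracket of two vector fields:
`[X, Y](x) = DY(x)[X(x)] − DX(x)[Y(x)]`. -/
noncomputable def vLie {n : ℕ} (X Y : VF n) : VF n :=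
  fun x => fderiv ℝ Y x (X x) - fderiv ℝ X x (Y x)

/-- The `m`-ary bracket induced by the decomposable `m`-vector field `Z 0 ∧ ⋯ ∧ Z (m-1)`:
the determinant of the matrix whose `(i, j)` entry is `(Z i) (f j)`. -/
noncomputable def detBracket {n m : ℕ} (Z : Fin m → VF n)
    (f : Fin m → ((Fin n → ℝ) → ℝ)) : (Fin n → ℝ) → ℝ :=
  fun x => Matrix.det (Matrix.of fun i j => vAct (Z i) (f j) x)

/-- The generalized Jacobi identity of order `m` for an `m`-ary bracket `B` on smooth
functions on `ℝⁿ`: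
`∑_{σ ∈ S_{2m−1}} sign σ • B(B(f_{σ(1)}, …, f_{σ(m)}), f_{σ(m+1)}, …, f_{σ(2m−1)}) = 0`. -/
def GJI (n m : ℕ) (B : (Fin m → ((Fin n → ℝ) → ℝ)) → ((Fin n → ℝ) → ℝ)) : Prop :=
  ∀ f : Fin (2 * m - 1) → ((Fin n → ℝ) → ℝ), (∀ i, ContDiff ℝ (⊤ : ℕ∞) (f i)) →
    ∀ x, (∑ σ : Equiv.Perm (Fin (2 * m - 1)),
      ((Equiv.Perm.sign σ : ℤ) : ℝ) *
        B (fun i : Fin m =>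
            if _hi : (i : ℕ) = 0 then
              B (fun k : Fin m => f (σ ⟨(k : ℕ), lt_of_lt_of_le k.isLt (by omega)⟩))
            else f (σ ⟨m - 1 + (i : ℕ), by have hi := i.isLt; omega⟩)) x) = 0

/-- Rows `(Γ, X₁, …, X_{s−4}, X_{s−3}, X_{s−2})` of the first summand of `𝒩`
(here `X i` denotes `X_{i+1}`). -/
noncomputable def rowsM {n : ℕ} (s : ℕ) (Γ : VF n) (X : Fin s → VF n) :
    Fin (s - 1) → VF n :=
  fun i =>
    if _hi : (i : ℕ) = 0 then Γ
    else X ⟨(i : ℕ) - 1, by have := i.isLt; omega⟩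

/-- Rows `(Γ, X₁, …, X_{s−4}, X_{s−1}, X_s)` of the second summand of `𝒩`
(here `X i` denotes `X_{i+1}`). -/
noncomputable def rowsM' {n : ℕ} (s : ℕ) (Γ : VF n) (X : Fin s → VF n) :
    Fin (s - 1) → VF n :=
  fun i =>
    if _hi : (i : ℕ) = 0 then Γ
    else if (i : ℕ) ≤ s - 4 then X ⟨(i : ℕ) - 1, by have := i.isLt; omega⟩
    else X ⟨(i : ℕ) + 1, by have := i.isLt; omega⟩

/-- Rows `(X₁, …, X_{s−4}, X_{s−3}, X_{s−2})` of the first summand of the multiplier. -/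
noncomputable def rowsA {n : ℕ} (s : ℕ) (X : Fin s → VF n) : Fin (s - 2) → VF n :=
  fun i => X ⟨(i : ℕ), by have := i.isLt; omega⟩

/-- Rows `(X₁, …, X_{s−4}, X_{s−1}, X_s)` of the second summand of the multiplier. -/
noncomputable def rowsA' {n : ℕ} (s : ℕ) (X : Fin s → VF n) : Fin (s - 2) → VF n :=
  fun i =>
    if (i : ℕ) < s - 4 then X ⟨(i : ℕ), by have := i.isLt; omega⟩
    else X ⟨(i : ℕ) + 2, by have := i.isLt; omega⟩

/-- The argument tuple `(f, h₁, …, h_{s−2})` for the bracket `B`. -/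
def consArg {n : ℕ} (s : ℕ) (f : (Fin n → ℝ) → ℝ)
    (h : Fin (s - 2) → ((Fin n → ℝ) → ℝ)) : Fin (s - 1) → ((Fin n → ℝ) → ℝ) :=
  fun k =>
    if _hk : (k : ℕ) = 0 then f
    else h ⟨(k : ℕ) - 1, by have := k.isLt; omega⟩


lemma one_le_topE : (1 : WithTop ℕ∞) ≤ ((⊤:ℕ∞) : WithTop ℕ∞) := by
  exact_mod_cast (le_top : (1:ℕ∞) ≤ ⊤)

lemma two_le_topE : (2 : WithTop ℕ∞) ≤ ((⊤:ℕ∞) : WithTop ℕ∞) := by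
  rw [show ((2:WithTop ℕ∞)) = (((2:ℕ∞)):WithTop ℕ∞) by norm_cast]
  exact WithTop.coe_le_coe.mpr le_top

lemma top_add_one_le_topE : ((⊤:ℕ∞) : WithTop ℕ∞) + 1 ≤ ((⊤:ℕ∞) : WithTop ℕ∞) := by
  exact_mod_cast (le_top : (⊤:ℕ∞)+1 ≤ ⊤)

open Finset in
lemma detBracket_eq {n m : ℕ} (Z : Fin m → VF n) (g : Fin m → ((Fin n → ℝ) → ℝ))
    (y : Fin n → ℝ) :
    detBracket Z g y = ∑ σ : Equiv.Perm (Fin m),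
      ((Equiv.Perm.sign σ : ℤ) : ℝ) * ∏ i, vAct (Z (σ i)) (g i) y := by
  simp [detBracket, Matrix.det_apply, Units.smul_def, zsmul_eq_mul]

lemma vAct_contDiff {n : ℕ} {Z : VF n} {f : (Fin n → ℝ) → ℝ}
    (hZ : ContDiff ℝ (⊤ : ℕ∞) Z) (hf : ContDiff ℝ (⊤ : ℕ∞) f) :
    ContDiff ℝ (⊤ : ℕ∞) (vAct Z f) :=
  (hf.fderiv_right top_add_one_le_topE).clm_apply hZ

lemma detBracket_diffAt {n m : ℕ} {Z : Fin m → VF n} {f : Fin m → ((Fin n → ℝ) → ℝ)}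
    (hZ : ∀ i, ContDiff ℝ (⊤ : ℕ∞) (Z i)) (hf : ∀ j, ContDiff ℝ (⊤ : ℕ∞) (f j))
    (x : Fin n → ℝ) : DifferentiableAt ℝ (detBracket Z f) x := by
  have h : detBracket Z f = fun y => ∑ σ : Equiv.Perm (Fin m),
      ((Equiv.Perm.sign σ : ℤ) : ℝ) * ∏ i, vAct (Z (σ i)) (f i) y :=
    funext fun y => detBracket_eq Z f y
  rw [h]
  refine DifferentiableAt.fun_sum fun σ _ => DifferentiableAt.const_mul ?_ _
  exact (HasFDerivAt.finset_prod fun i _ =>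
    (((vAct_contDiff (hZ _) (hf i)).differentiable (by simp)) x).hasFDerivAt).differentiableAt

lemma vAct_comm {n : ℕ} {Γ Z : VF n} (hΓ : ContDiff ℝ (⊤ : ℕ∞) Γ)
    (hZ : ContDiff ℝ (⊤ : ℕ∞) Z) (h : vLie Z Γ = 0)
    {f : (Fin n → ℝ) → ℝ} (hf : ContDiff ℝ (⊤ : ℕ∞) f) :
    vAct Γ (vAct Z f) = vAct Z (vAct Γ f) := by
  funext x
  have hfd : ContDiff ℝ (⊤ : ℕ∞) (fderiv ℝ f) := hf.fderiv_right top_add_one_le_topE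
  have hdx : DifferentiableAt ℝ (fderiv ℝ f) x := (hfd.differentiable (by simp)) x
  have hZx : DifferentiableAt ℝ Z x := (hZ.differentiable (by simp)) x
  have hΓx : DifferentiableAt ℝ Γ x := (hΓ.differentiable (by simp)) x
  have hsymm : ∀ v w, fderiv ℝ (fderiv ℝ f) x v w = fderiv ℝ (fderiv ℝ f) x w v :=
    hf.contDiffAt.isSymmSndFDerivAt (by rw [minSmoothness_of_isRCLikeNormedField]; exact two_le_topE)
  have hlie : fderiv ℝ Γ x (Z x) = fderiv ℝ Z x (Γ x) := by
    have hx := congrFun h x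
    simp only [vLie, Pi.zero_apply] at hx
    exact sub_eq_zero.mp hx
  have e1 : fderiv ℝ (fun y => fderiv ℝ f y (Z y)) x
      = (fderiv ℝ f x).comp (fderiv ℝ Z x) + (fderiv ℝ (fderiv ℝ f) x).flip (Z x) :=
    fderiv_clm_apply hdx hZx
  have e2 : fderiv ℝ (fun y => fderiv ℝ f y (Γ y)) x
      = (fderiv ℝ f x).comp (fderiv ℝ Γ x) + (fderiv ℝ (fderiv ℝ f) x).flip (Γ x) :=
    fderiv_clm_apply hdx hΓx
  show fderiv ℝ (fun y => fderiv ℝ f y (Z y)) x (Γ x)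
      = fderiv ℝ (fun y => fderiv ℝ f y (Γ y)) x (Z x)
  rw [e1, e2]
  simp only [ContinuousLinearMap.add_apply, ContinuousLinearMap.comp_apply,
    ContinuousLinearMap.flip_apply]
  rw [hlie, hsymm (Γ x) (Z x)]

lemma vAct_sum {n : ℕ} (Γ : VF n) {ι : Type*} (u : Finset ι)
    (g : ι → (Fin n → ℝ) → ℝ) {x : Fin n → ℝ}
    (hg : ∀ i ∈ u, DifferentiableAt ℝ (g i) x) :
    vAct Γ (fun y => ∑ i ∈ u, g i y) x = ∑ i ∈ u, vAct Γ (g i) x := by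
  simp only [vAct, fderiv_fun_sum hg, ContinuousLinearMap.coe_sum', Finset.sum_apply]

lemma vAct_const_mul {n : ℕ} (Γ : VF n) (c : ℝ) {g : (Fin n → ℝ) → ℝ} {x : Fin n → ℝ}
    (hg : DifferentiableAt ℝ g x) :
    vAct Γ (fun y => c * g y) x = c * vAct Γ g x := by
  simp only [vAct, fderiv_const_mul hg c, ContinuousLinearMap.coe_smul',
    Pi.smul_apply, smul_eq_mul]

lemma vAct_prod {n m : ℕ} (Γ : VF n) (g : Fin m → (Fin n → ℝ) → ℝ) {x : Fin n → ℝ}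
    (hg : ∀ i, DifferentiableAt ℝ (g i) x) :
    vAct Γ (fun y => ∏ i, g i y) x
      = ∑ j, ∏ i, Function.update (fun i => g i x) j (vAct Γ (g j) x) i := by
  have h := (HasFDerivAt.finset_prod (u := Finset.univ)
    (g' := fun i => fderiv ℝ (g i) x) fun i _ => (hg i).hasFDerivAt).fderiv
  calc vAct Γ (fun y => ∏ i, g i y) x
      = (∑ j, (∏ i ∈ Finset.univ.erase j, g i x) • fderiv ℝ (g j) x) (Γ x) := by
        rw [vAct, h]
    _ = ∑ j, (∏ i ∈ Finset.univ.erase j, g i x) * vAct Γ (g j) x := by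
        simp [vAct]
    _ = ∑ j, ∏ i, Function.update (fun i => g i x) j (vAct Γ (g j) x) i := by
        refine Finset.sum_congr rfl fun j _ => ?_
        rw [Finset.prod_update_of_mem (Finset.mem_univ j), mul_comm,
          Finset.sdiff_singleton_eq_erase]
    
lemma det_derivation {n m : ℕ} (Γ : VF n) (Z : Fin m → VF n)
    (hZ : ∀ i, ContDiff ℝ (⊤ : ℕ∞) (Z i))
    (hcomm : ∀ i (f : (Fin n → ℝ) → ℝ), ContDiff ℝ (⊤ : ℕ∞) f →
      vAct Γ (vAct (Z i) f) = vAct (Z i) (vAct Γ f))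
    (f : Fin m → (Fin n → ℝ) → ℝ) (hf : ∀ j, ContDiff ℝ (⊤ : ℕ∞) (f j)) (x : Fin n → ℝ) :
    vAct Γ (detBracket Z f) x
      = ∑ j, detBracket Z (Function.update f j (vAct Γ (f j))) x := by
  set g : Equiv.Perm (Fin m) → Fin m → (Fin n → ℝ) → ℝ :=
    fun σ i => vAct (Z (σ i)) (f i) with hg
  have hgd : ∀ σ i (y : Fin n → ℝ), DifferentiableAt ℝ (g σ i) y := fun σ i y =>
    ((vAct_contDiff (hZ _) (hf i)).differentiable (by simp)) y
  have hProdd : ∀ σ (y : Fin n → ℝ), DifferentiableAt ℝ (fun z => ∏ i, g σ i z) y :=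
    fun σ y => (HasFDerivAt.finset_prod fun i _ => (hgd σ i y).hasFDerivAt).differentiableAt
  have hdetF : detBracket Z f = fun y => ∑ σ : Equiv.Perm (Fin m),
      ((Equiv.Perm.sign σ : ℤ) : ℝ) * ∏ i, g σ i y :=
    funext fun y => detBracket_eq Z f y
  calc vAct Γ (detBracket Z f) x
      = ∑ σ : Equiv.Perm (Fin m),
          vAct Γ (fun y => ((Equiv.Perm.sign σ : ℤ) : ℝ) * ∏ i, g σ i y) x := by
        rw [hdetF]
        exact vAct_sum _ _ _ fun σ _ => (hProdd σ x).const_mul _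
    _ = ∑ σ : Equiv.Perm (Fin m), ∑ j, ((Equiv.Perm.sign σ : ℤ) : ℝ) *
          ∏ i, Function.update (fun i => g σ i x) j (vAct Γ (g σ j) x) i := by
        refine Finset.sum_congr rfl fun σ _ => ?_
        rw [vAct_const_mul _ _ (hProdd σ x), vAct_prod _ _ (fun i => hgd σ i x),
          Finset.mul_sum]
    _ = ∑ j, ∑ σ : Equiv.Perm (Fin m), ((Equiv.Perm.sign σ : ℤ) : ℝ) *
          ∏ i, Function.update (fun i => g σ i x) j (vAct Γ (g σ j) x) i :=
        Finset.sum_comm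
    _ = ∑ j, detBracket Z (Function.update f j (vAct Γ (f j))) x := by
        refine Finset.sum_congr rfl fun j _ => ?_
        rw [detBracket_eq]
        refine Finset.sum_congr rfl fun σ _ => ?_
        congr 1
        refine Finset.prod_congr rfl fun i _ => ?_
        rcases eq_or_ne i j with rfl | hij
        · rw [Function.update_self, Function.update_self, hg]
          exact congrFun (hcomm (σ i) (f i) (hf i)) x
        · rw [Function.update_of_ne hij, Function.update_of_ne hij]

/-- With `5 ≤ s ≤ n − 1` and smooth vector fields `Γ, X₁, …, X_s` on `ℝⁿ`
satisfying `[Xᵢ, Γ] = 0`, the field `Γ` is a derivation of the `(s−1)`-ary bracket `B`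
induced by `𝒩 = Γ∧X₁∧⋯∧X_{s−2} + Γ∧X₁∧⋯∧X_{s−4}∧X_{s−1}∧X_s`:
`Γ(B(f₁, …, f_{s−1})) = ∑ⱼ B(f₁, …, Γ fⱼ, …, f_{s−1})` (i.e. `L_Γ 𝒩 = 0`). -/
theorem statement3 (n s : ℕ) (hs : 5 ≤ s) (hn : s + 1 ≤ n)
    (Γ : VF n) (X : Fin s → VF n)
    (hΓ : ContDiff ℝ (⊤ : ℕ∞) Γ) (hX : ∀ i, ContDiff ℝ (⊤ : ℕ∞) (X i))
    (hXΓ : ∀ i, vLie (X i) Γ = 0) :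
    ∀ f : Fin (s - 1) → ((Fin n → ℝ) → ℝ), (∀ i, ContDiff ℝ (⊤ : ℕ∞) (f i)) → ∀ x,
      vAct Γ (fun y => detBracket (rowsM s Γ X) f y + detBracket (rowsM' s Γ X) f y) x
      = ∑ j : Fin (s - 1),
          (detBracket (rowsM s Γ X) (Function.update f j (vAct Γ (f j))) x
            + detBracket (rowsM' s Γ X) (Function.update f j (vAct Γ (f j))) x) := by
  intro f hf x
  have hM : ∀ i, ContDiff ℝ (⊤ : ℕ∞) (rowsM s Γ X i) := by
    intro i; unfold rowsM; split
    · exact hΓ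
    · exact hX _
  have hM' : ∀ i, ContDiff ℝ (⊤ : ℕ∞) (rowsM' s Γ X i) := by
    intro i; unfold rowsM'; split
    · exact hΓ
    · split
      · exact hX _
      · exact hX _
  have hcommM : ∀ i (f : (Fin n → ℝ) → ℝ), ContDiff ℝ (⊤ : ℕ∞) f →
      vAct Γ (vAct (rowsM s Γ X i) f) = vAct (rowsM s Γ X i) (vAct Γ f) := by
    intro i f hfc; unfold rowsM; split
    · rfl
    · exact vAct_comm hΓ (hX _) (hXΓ _) hfc
  have hcommM' : ∀ i (f : (Fin n → ℝ) → ℝ), ContDiff ℝ (⊤ : ℕ∞) f →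
      vAct Γ (vAct (rowsM' s Γ X i) f) = vAct (rowsM' s Γ X i) (vAct Γ f) := by
    intro i f hfc; unfold rowsM'; split
    · rfl
    · split
      · exact vAct_comm hΓ (hX _) (hXΓ _) hfc
      · exact vAct_comm hΓ (hX _) (hXΓ _) hfc
  have h1 : DifferentiableAt ℝ (detBracket (rowsM s Γ X) f) x := detBracket_diffAt hM hf x
  have h2 : DifferentiableAt ℝ (detBracket (rowsM' s Γ X) f) x := detBracket_diffAt hM' hf x
  have hadd : vAct Γ (fun y => detBracket (rowsM s Γ X) f y + detBracket (rowsM' s Γ X) f y) x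
      = vAct Γ (detBracket (rowsM s Γ X) f) x + vAct Γ (detBracket (rowsM' s Γ X) f) x := by
    simp only [vAct, fderiv_fun_add h1 h2, ContinuousLinearMap.add_apply]
  rw [hadd, det_derivation Γ _ hM hcommM f hf x, det_derivation Γ _ hM' hcommM' f hf x,
    ← Finset.sum_add_distrib]
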